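/- Any closed unit disk D in the plane that intersects a fixed closed unit disk D_0 centered at the origin must contain at least one of 11 fixed points, namely the origin together with the 10 points at distance 3/2 from the origin at angles 2πk/10, k = 0, ..., 9. -/

import Mathlib

open Complex

/-- Any closed unit disk in the plane (identified with `ℂ`) meeting the closed unit
disk centered at the origin contains one of 11 fixed points: the origin, or one of
the 10 points at distance `3/2` from the origin at angles `2πk/10`. -/
theorem unit_disk_pierced_by_eleven_points (z : ℂ)
    (hmeet : (Metric.closedBall z 1 ∩ Metric.closedBall (0 : ℂ) 1).Nonempty) :
    (0 : ℂ) ∈ Metric.closedBall z 1 ∨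
    ∃ k : Fin 10, (3 / 2 : ℂ) * Complex.exp (Complex.I * (2 * Real.pi * k / 10))
      ∈ Metric.closedBall z 1 := by
  obtain ⟨x, hx1, hx2⟩ := hmeet
  rw [Metric.mem_closedBall] at hx1 hx2
  have hpi : (0:ℝ) < Real.pi := Real.pi_pos
  have hpilt : Real.pi < 3.15 := by
    have := Real.pi_lt_d2
    linarith
  have hz2 : ‖z‖ ≤ 2 := by
    have : dist z 0 ≤ dist z x + dist x 0 := dist_triangle _ _ _
    rw [dist_comm z x] at this
    simpa [Complex.dist_eq] using le_trans this (by linarith)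
  by_cases hz1 : ‖z‖ ≤ 1
  · left
    rw [Metric.mem_closedBall, dist_comm, Complex.dist_eq]
    simpa using hz1
  · right
    push_neg at hz1
    set θ := Complex.arg z with hθ
    set r := ‖z‖ with hr
    set n : ℤ := round (θ / (Real.pi/5)) with hn
    have hmod0 : 0 ≤ n % 10 := Int.emod_nonneg n (by norm_num)
    have hmod10 : n % 10 < 10 := Int.emod_lt_of_pos n (by norm_num)
    refine ⟨⟨(n % 10).toNat, by omega⟩, ?_⟩
    set a : ℝ := 2 * Real.pi * ((n % 10 : ℤ) : ℝ) / 10 with ha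
    -- the angle difference bound
    have hclose : |θ - Real.pi * n / 5| ≤ Real.pi / 10 := by
      have h1 : |θ / (Real.pi/5) - n| ≤ 1/2 := abs_sub_round _
      have h2 : θ - Real.pi * n / 5 = (Real.pi/5) * (θ / (Real.pi/5) - n) := by
        field_simp
      rw [h2, abs_mul, abs_of_pos (by positivity : (0:ℝ) < Real.pi/5)]
      calc Real.pi/5 * |θ / (Real.pi/5) - n| ≤ Real.pi/5 * (1/2) := by
            exact mul_le_mul_of_nonneg_left h1 (by positivity)
        _ = Real.pi / 10 := by ring
    have hcos_eq : Real.cos (θ - a) = Real.cos (θ - Real.pi * n / 5) := by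
      have hq : a = Real.pi * n / 5 - (n / 10 : ℤ) * (2 * Real.pi) := by
        have : (n % 10 : ℤ) = n - 10 * (n / 10) := by
          rw [Int.emod_def]
        rw [ha, this]
        push_cast
        ring
      rw [hq]
      have : θ - (Real.pi * n / 5 - (n / 10 : ℤ) * (2 * Real.pi))
          = (θ - Real.pi * n / 5) + (n / 10 : ℤ) * (2 * Real.pi) := by ring
      rw [this, Real.cos_add_int_mul_two_pi]
    have hcosb : (0.95 : ℝ) ≤ Real.cos (θ - a) := by
      rw [hcos_eq]
      have h1 : (1:ℝ) - (θ - Real.pi * n / 5) ^ 2 / 2 ≤ Real.cos (θ - Real.pi * n / 5) :=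
        Real.one_sub_sq_div_two_le_cos
      have h2 : (θ - Real.pi * n / 5) ^ 2 ≤ (Real.pi / 10) ^ 2 := by
        have h3 := abs_le.mp hclose
        exact sq_le_sq' h3.1 h3.2
      nlinarith
    -- rewrite the point
    rw [Metric.mem_closedBall, Complex.dist_eq]
    have hk : ((⟨(n % 10).toNat, by omega⟩ : Fin 10) : ℂ) = ((((n % 10 : ℤ) : ℝ)) : ℂ) := by
      exact_mod_cast congrArg (Int.cast : ℤ → ℂ) (Int.toNat_of_nonneg hmod0)
    have harg : Complex.I * (2 * (Real.pi : ℂ) * ((⟨(n % 10).toNat, by omega⟩ : Fin 10) : ℂ) / 10)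
        = (a : ℂ) * Complex.I := by
      rw [hk, ha]
      push_cast
      ring
    rw [harg, Complex.exp_mul_I]
    have hz_eq : (r : ℂ) * (Complex.cos θ + Complex.sin θ * Complex.I) = z :=
      Complex.norm_mul_cos_add_sin_mul_I z
    rw [← hz_eq]
    have habssq : ∀ w : ℂ, ‖w‖ ^ 2 = w.re ^ 2 + w.im ^ 2 := by
      intro w
      rw [Complex.sq_norm, Complex.normSq_apply]
      ring
    set w : ℂ := (3/2 : ℂ) * (Complex.cos a + Complex.sin a * Complex.I)
        - (r : ℂ) * (Complex.cos θ + Complex.sin θ * Complex.I) with hw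
    have hre : w.re = 3/2 * Real.cos a - r * Real.cos θ := by
      simp [hw, Complex.cos_ofReal_re, Complex.sin_ofReal_re]
    have him : w.im = 3/2 * Real.sin a - r * Real.sin θ := by
      simp [hw, Complex.cos_ofReal_im, Complex.sin_ofReal_im,
        Complex.cos_ofReal_re, Complex.sin_ofReal_re]
    have hsq : ‖w‖ ^ 2 ≤ 1 := by
      rw [habssq, hre, him]
      have hcs : Real.cos (θ - a) = Real.cos θ * Real.cos a + Real.sin θ * Real.sin a :=
        Real.cos_sub θ a
      have h1 : Real.sin a ^ 2 + Real.cos a ^ 2 = 1 := Real.sin_sq_add_cos_sq a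
      have h2 : Real.sin θ ^ 2 + Real.cos θ ^ 2 = 1 := Real.sin_sq_add_cos_sq θ
      have hrc : r * 0.95 ≤ r * Real.cos (θ - a) :=
        mul_le_mul_of_nonneg_left hcosb (by linarith : (0:ℝ) ≤ r)
      nlinarith [mul_nonneg (by linarith : (0:ℝ) ≤ r - 1) (by linarith : (0:ℝ) ≤ 2 - r)]
    nlinarith [norm_nonneg w]
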